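/- Let (M, φ, ξ, η, g) be a Lorentzian almost contact metric manifold (s = 1, g(ξ,ξ) = −1), p ∈ M, and F : (T_pM)^4 → ℝ a curvature-like map satisfying F(x, ξ, y, ξ) = g(φx, φy) and F(φx, φy, φz, ξ) = 0 for all x,y,z. Then F vanishes on all degenerate 2-planes span{u, y} with u ∈ N(ξ_p) and y ∈ u^⊥ ∩ Im(φ_p) if and only if F(x,y,z,w) = g(x,w)g(y,z) − g(y,w)g(x,z) for all x,y,z,w ∈ T_pM. -/

import Mathlib

/-- A symmetric bilinear form on a real vector space is *Lorentzian* if it admits an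
orthonormal basis with exactly one timelike vector. -/
def IsLorentzian {V : Type*} [AddCommGroup V] [Module ℝ V]
    (g : V →ₗ[ℝ] V →ₗ[ℝ] ℝ) : Prop :=
  ∃ (n : ℕ) (b : Module.Basis (Fin (n + 1)) ℝ V), ∀ i j,
    g (b i) (b j) = if i = j then (if i = 0 then (-1 : ℝ) else 1) else 0

lemma lorentz_posdef {V : Type*} [AddCommGroup V] [Module ℝ V]
    (g : V →ₗ[ℝ] V →ₗ[ℝ] ℝ) (hgL : IsLorentzian g) (ξ : V) (hξ : g ξ ξ = -1) :
    ∀ v : V, g v ξ = 0 → g v v ≤ 0 → v = 0 := by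
  obtain ⟨n, b, hb⟩ := hgL
  have gexp : ∀ x y : V, g x y
      = ∑ i : Fin (n+1), (if i = 0 then (-1:ℝ) else 1) * (b.repr x i * b.repr y i) := by
    intro x y
    conv_lhs => rw [← b.sum_repr x, ← b.sum_repr y]
    simp only [map_sum, map_smul, LinearMap.sum_apply, LinearMap.smul_apply, smul_eq_mul, hb,
      mul_ite, mul_zero, mul_one, Finset.sum_ite_eq', Finset.mem_univ, if_true]
    exact Finset.sum_congr rfl fun j _ => by split <;> ring
  intro v hvξ hvv
  set a : Fin (n+1) → ℝ := fun i => b.repr ξ i with ha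
  set u : Fin (n+1) → ℝ := fun i => b.repr v i with hu
  set s : Finset (Fin (n+1)) := Finset.univ.erase 0 with hs
  have split : ∀ f : Fin (n+1) → ℝ,
      ∑ i : Fin (n+1), (if i = 0 then (-1:ℝ) else 1) * f i = -f 0 + ∑ i ∈ s, f i := by
    intro f
    rw [← Finset.add_sum_erase _ (fun i => (if i = 0 then (-1:ℝ) else 1) * f i) (Finset.mem_univ 0)]
    have h2 : ∑ i ∈ Finset.univ.erase (0 : Fin (n+1)), (if i = 0 then (-1:ℝ) else 1) * f i
        = ∑ i ∈ s, f i :=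
      Finset.sum_congr rfl fun i hi => by rw [if_neg (Finset.mem_erase.mp hi).1, one_mul]
    rw [h2]; simp
  have A1 : -a 0 * a 0 + ∑ i ∈ s, a i * a i = -1 := by
    have := gexp ξ ξ; rw [split (fun i => a i * a i)] at this; rw [← hξ, this]; ring
  have A2 : -u 0 * a 0 + ∑ i ∈ s, u i * a i = 0 := by
    have := gexp v ξ; rw [split (fun i => u i * a i)] at this; rw [← hvξ, this]; ring
  have A3 : -u 0 * u 0 + ∑ i ∈ s, u i * u i ≤ 0 := by
    have h := gexp v v; rw [split (fun i => u i * u i)] at h; linarith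
  have CS := Finset.sum_mul_sq_le_sq_mul_sq s u a
  have hSu : (0:ℝ) ≤ ∑ i ∈ s, u i ^ 2 := Finset.sum_nonneg fun i _ => sq_nonneg _
  have hSa : (0:ℝ) ≤ ∑ i ∈ s, a i ^ 2 := Finset.sum_nonneg fun i _ => sq_nonneg _
  have e1 : ∑ i ∈ s, a i * a i = ∑ i ∈ s, a i ^ 2 := Finset.sum_congr rfl fun i _ => (sq (a i)).symm ▸ by ring
  have e2 : ∑ i ∈ s, u i * u i = ∑ i ∈ s, u i ^ 2 := Finset.sum_congr rfl fun i _ => by ring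
  rw [e1] at A1; rw [e2] at A3
  have hsum : ∑ i ∈ s, u i * a i = u 0 * a 0 := by linarith
  have hSa1 : ∑ i ∈ s, a i ^ 2 = a 0 ^ 2 - 1 := by nlinarith
  have h1 : (u 0 * a 0) ^ 2 ≤ (∑ i ∈ s, u i ^ 2) * (a 0 ^ 2 - 1) := by
    rw [← hSa1, ← hsum]; exact CS
  have h2 : (∑ i ∈ s, u i ^ 2) * (a 0 ^ 2 - 1) ≤ u 0 ^ 2 * (a 0 ^ 2 - 1) :=
    mul_le_mul_of_nonneg_right (by nlinarith) (by linarith)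
  have hu0sq : u 0 ^ 2 ≤ 0 := by nlinarith
  have hu0 : u 0 = 0 := by nlinarith [sq_nonneg (u 0)]
  have hSu0 : ∑ i ∈ s, u i ^ 2 = 0 := by nlinarith
  have hui : ∀ i, u i = 0 := by
    intro i
    by_cases hi : i = 0
    · rw [hi]; exact hu0
    · have := (Finset.sum_eq_zero_iff_of_nonneg (fun j _ => sq_nonneg (u j))).mp hSu0 i
        (Finset.mem_erase.mpr ⟨hi, Finset.mem_univ i⟩)
      exact pow_eq_zero_iff (by norm_num) |>.mp this
  have : b.repr v = 0 := Finsupp.ext fun i => hui i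
  have := b.repr.map_eq_zero_iff.mp this
  exact this

set_option maxHeartbeats 2000000 in
/-- On (the tangent space at a point `p` of) a Lorentzian almost contact metric
manifold (`s = 1`, `g(ξ,ξ) = −1`), a curvature-like map `F` with
`F(x,ξ,y,ξ) = g(φx,φy)` and `F(φx,φy,φz,ξ) = 0` vanishes on every degenerate
plane `span{u,y}` with `u ∈ N(ξ_p)` and `y ∈ u^⊥ ∩ Im(φ_p)` iff
`F(x,y,z,w) = g(x,w)g(y,z) − g(y,w)g(x,z)` for all `x,y,z,w`. -/
theorem curvatureLike_contact_characterization
    {V : Type*} [AddCommGroup V] [Module ℝ V] [FiniteDimensional ℝ V]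
    (g : V →ₗ[ℝ] V →ₗ[ℝ] ℝ) (hgsymm : ∀ x y, g x y = g y x)
    (hgL : IsLorentzian g)
    (φ : V →ₗ[ℝ] V) (ξ : V) (η : V →ₗ[ℝ] ℝ)
    (hphi2 : ∀ x, φ (φ x) = -x + η x • ξ)
    (hηξ : η ξ = 1)
    (hφξ : φ ξ = 0) (hηφ : ∀ x, η (φ x) = 0)
    (hmetriccompat : ∀ x y, g (φ x) (φ y) = g x y + η x * η y)
    (hgxi : ∀ x : V, g x ξ = -η x)
    (F : V →ₗ[ℝ] V →ₗ[ℝ] V →ₗ[ℝ] V →ₗ[ℝ] ℝ)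
    -- curvature symmetries
    (hpair : ∀ x y z w, F x y z w = F z w x y)
    (hanti1 : ∀ x y z w, F x y z w = - F y x z w)
    (hanti2 : ∀ x y z w, F x y z w = - F x y w z)
    (hbianchi : ∀ x y z w, F x y z w + F y z x w + F z x y w = 0)
    -- the two structural conditions on `F`
    (hF1 : ∀ x y : V, F x ξ y ξ = g (φ x) (φ y))
    (hF2 : ∀ x y z : V, F (φ x) (φ y) (φ z) ξ = 0) :
    (∀ u y : V, g u u = 0 → g u ξ = -1 → g u y = 0 → η y = 0 →
        F u y u y = 0) ↔
    (∀ x y z w : V, F x y z w = g x w * g y z - g y w * g x z) := by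
  constructor
  · intro h
    -- basic facts
    have hgξξ : g ξ ξ = -1 := by rw [hgxi, hηξ]
    have hgyξ : ∀ y : V, η y = 0 → g y ξ = 0 := fun y hy => by rw [hgxi, hy, neg_zero]
    have hgξy : ∀ y : V, η y = 0 → g ξ y = 0 := fun y hy => by rw [hgsymm, hgxi, hy, neg_zero]
    have posdef := lorentz_posdef g hgL ξ hgξξ
    have hpos : ∀ v : V, η v = 0 → v ≠ 0 → 0 < g v v := by
      intro v hv hv0
      by_contra hle
      push_neg at hle
      exact hv0 (posdef v (hgyξ v hv) hle)
    -- (†) : F vanishes on W×W×W×{ξ}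
    have hdag : ∀ a b c : V, η a = 0 → η b = 0 → η c = 0 → F a b c ξ = 0 := by
      intro a b c ha hb hc
      have key : ∀ a : V, η a = 0 → φ (-(φ a)) = a := by
        intro a ha
        rw [map_neg, hphi2, ha, zero_smul, add_zero, neg_neg]
      rw [← key a ha, ← key b hb, ← key c hc]
      exact hF2 _ _ _
    -- (★)
    have hstar : ∀ x y : V, η x = 0 → η y = 0 → g x x = 1 → g x y = 0 →
        F x y x y = - g y y := by
      intro x y hx hy hxx hxy
      have hgxy' : g y x = 0 := (hgsymm y x).trans hxy
      have c1 : g (ξ + x) (ξ + x) = 0 := by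
        simp only [map_add, LinearMap.add_apply]
        rw [hgξξ, hgξy x hx, hgyξ x hx, hxx]; ring
      have c2 : g (ξ + x) ξ = -1 := by
        simp only [map_add, LinearMap.add_apply]; rw [hgξξ, hgyξ x hx]; ring
      have c3 : g (ξ + x) y = 0 := by
        simp only [map_add, LinearMap.add_apply]; rw [hgξy y hy, hxy]; ring
      have d1 : g (ξ - x) (ξ - x) = 0 := by
        simp only [map_sub, LinearMap.sub_apply]
        rw [hgξξ, hgξy x hx, hgyξ x hx, hxx]; ring
      have d2 : g (ξ - x) ξ = -1 := by
        simp only [map_sub, LinearMap.sub_apply]; rw [hgξξ, hgyξ x hx]; ring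
      have d3 : g (ξ - x) y = 0 := by
        simp only [map_sub, LinearMap.sub_apply]; rw [hgξy y hy, hxy]; ring
      have h1 := h (ξ + x) y c1 c2 c3 hy
      have h2 := h (ξ - x) y d1 d2 d3 hy
      simp only [map_add, map_sub, LinearMap.add_apply, LinearMap.sub_apply] at h1 h2
      rw [sub_eq_add_neg ξ x, ← neg_one_smul ℝ x] at h2
      simp only [map_add, map_smul, LinearMap.add_apply, LinearMap.smul_apply, smul_eq_mul] at h2
      have hξyξy : F ξ y ξ y = g y y := by
        have e : F ξ y ξ y = F y ξ y ξ := by rw [hanti1, hanti2]; ring_nf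
        rw [e, hF1, hmetriccompat, hy]; ring
      linarith
    -- QW : sectional on W
    have hQW : ∀ x y : V, η x = 0 → η y = 0 →
        F x y x y = g x y * g x y - g x x * g y y := by
      intro x y hx hy
      by_cases hx0 : x = 0
      · subst hx0; simp
      · have hr : 0 < g x x := hpos x hx hx0
        set r := g x x with hrdef
        set c := g x y / r with hcdef
        have hcr : c * r = g x y := div_mul_cancel₀ _ hr.ne'
        set y' := y - c • x with hy'def
        have hy' : η y' = 0 := by
          simp only [hy'def, map_sub, map_smul, smul_eq_mul, hy, hx]; ring
        have hxy' : g x y' = 0 := by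
          simp only [hy'def, map_sub, map_smul, smul_eq_mul]
          rw [← hrdef]; linarith [hcr]
        set s := Real.sqrt r with hsdef
        have hs2 : s ^ 2 = r := Real.sq_sqrt hr.le
        have hs0 : s ≠ 0 := by
          intro hcon; rw [hcon] at hs2; simp at hs2; linarith
        set xh := s⁻¹ • x with hxhdef
        have hxhη : η xh = 0 := by simp [hxhdef, map_smul, hx]
        have hxhxh : g xh xh = 1 := by
          simp only [hxhdef, map_smul, LinearMap.smul_apply, smul_eq_mul]
          rw [← hrdef]
          field_simp
          nlinarith
        have hxhy' : g xh y' = 0 := by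
          simp only [hxhdef, map_smul, LinearMap.smul_apply, smul_eq_mul, hxy', mul_zero]
        have hFs := hstar xh y' hxhη hy' hxhxh hxhy'
        have hxs : x = s • xh := by
          rw [hxhdef, smul_smul, mul_inv_cancel₀ hs0, one_smul]
        have e1 : F x y' x y' = s ^ 2 * F xh y' xh y' := by
          rw [hxs]; simp only [map_smul, LinearMap.smul_apply, smul_eq_mul]; ring
        have e2 : F x y x y = F x y' x y' := by
          have : y = y' + c • x := by rw [hy'def]; abel
          rw [this]
          simp only [map_add, map_smul, LinearMap.add_apply, LinearMap.smul_apply, smul_eq_mul]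
          have z1 : F x x x y' = 0 := by have := hanti1 x x x y'; linarith
          have z2 : F x y' x x = 0 := by have := hanti2 x y' x x; linarith
          have z3 : F x x x x = 0 := by have := hanti1 x x x x; linarith
          rw [z1, z2, z3]; ring
        have hgy'y' : g y' y' = g y y - 2 * c * g x y + c ^ 2 * r := by
          simp only [hy'def, map_sub, map_smul, LinearMap.sub_apply, LinearMap.smul_apply,
            smul_eq_mul]
          rw [← hrdef, hgsymm y x]
          ring
        rw [e2, e1, hFs, hgy'y', hs2]
        linear_combination (g x y - c * r) * hcr
    -- F ξ u ξ v in general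
    have hFξ2 : ∀ u v : V, F ξ u ξ v = g u v + η u * η v := by
      intro u v
      have e : F ξ u ξ v = F u ξ v ξ := by
        rw [hanti1 ξ u ξ v, hanti2 u ξ ξ v]; ring_nf
      rw [e, hF1, hmetriccompat]
    -- Q with second argument in W, first arbitrary
    have hQ1 : ∀ x y : V, η y = 0 →
        F x y x y = g x y * g x y - g x x * g y y := by
      intro x y hy
      set x₀ := x - η x • ξ with hx₀def
      have hx₀ : η x₀ = 0 := by
        simp only [hx₀def, map_sub, map_smul, smul_eq_mul, hηξ]; ring
      have hxdec : x = η x • ξ + x₀ := by rw [hx₀def]; abel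
      have q1 : F ξ y ξ y = g y y := by rw [hFξ2, hy]; ring
      have q2 : F x₀ y ξ y = 0 := by
        have e := hanti2 x₀ y ξ y
        rw [e, hdag x₀ y y hx₀ hy hy]; ring
      have q2' : F ξ y x₀ y = 0 := by rw [hpair ξ y x₀ y, q2]
      have q3 := hQW x₀ y hx₀ hy
      have E : F x y x y = (η x)^2 * F ξ y ξ y + η x * F ξ y x₀ y + η x * F x₀ y ξ y
          + F x₀ y x₀ y := by
        conv_lhs => rw [hxdec]
        simp only [map_add, map_smul, LinearMap.add_apply, LinearMap.smul_apply, smul_eq_mul]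
        ring
      have R1 : g x y = g x₀ y := by
        conv_lhs => rw [hxdec]
        simp only [map_add, map_smul, LinearMap.add_apply, LinearMap.smul_apply, smul_eq_mul]
        rw [hgξy y hy]; ring
      have R2 : g x x = -(η x)^2 + g x₀ x₀ := by
        conv_lhs => rw [hxdec]
        simp only [map_add, map_smul, LinearMap.add_apply, LinearMap.smul_apply, smul_eq_mul]
        rw [hgξξ, hgξy x₀ hx₀, hgyξ x₀ hx₀]; ring
      rw [E, q1, q2, q2', q3, R1, R2]; ring
    -- Q everywhere
    have hQ : ∀ x y : V, F x y x y = g x y * g x y - g x x * g y y := by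
      intro x y
      set x₀ := x - η x • ξ with hx₀def
      have hx₀ : η x₀ = 0 := by
        simp only [hx₀def, map_sub, map_smul, smul_eq_mul, hηξ]; ring
      have hxdec : x = η x • ξ + x₀ := by rw [hx₀def]; abel
      set y₀ := y - η y • ξ with hy₀def
      have hy₀ : η y₀ = 0 := by
        simp only [hy₀def, map_sub, map_smul, smul_eq_mul, hηξ]; ring
      have hydec : y = η y • ξ + y₀ := by rw [hy₀def]; abel
      have p1 : F x ξ x ξ = g x x + η x * η x := by rw [hF1, hmetriccompat]
      -- p2 : F x y₀ x ξ = -(η x) * g x₀ y₀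
      have s1 : F ξ y₀ ξ ξ = 0 := by have := hanti2 ξ y₀ ξ ξ; linarith
      have s2 : F x₀ y₀ ξ ξ = 0 := by have := hanti2 x₀ y₀ ξ ξ; linarith
      have s3 : F x₀ y₀ x₀ ξ = 0 := hdag x₀ y₀ x₀ hx₀ hy₀ hx₀
      have s4 : F ξ y₀ x₀ ξ = -(g y₀ x₀) := by
        rw [hanti2 ξ y₀ x₀ ξ, hFξ2, hy₀]; ring
      have p2 : F x y₀ x ξ = -(η x) * g y₀ x₀ := by
        conv_lhs => rw [hxdec]
        simp only [map_add, map_smul, LinearMap.add_apply, LinearMap.smul_apply, smul_eq_mul]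
        rw [s1, s2, s3, s4]; ring
      have p3 : F x ξ x y₀ = F x y₀ x ξ := hpair x ξ x y₀
      have p4 := hQ1 x y₀ hy₀
      have E : F x y x y = (η y)^2 * F x ξ x ξ + η y * F x ξ x y₀ + η y * F x y₀ x ξ
          + F x y₀ x y₀ := by
        conv_lhs => rw [hydec]
        simp only [map_add, map_smul, LinearMap.add_apply, LinearMap.smul_apply, smul_eq_mul]
        ring
      have R1 : g x y = -(η x * η y) + g x₀ y₀ := by
        conv_lhs => rw [hxdec, hydec]
        simp only [map_add, map_smul, LinearMap.add_apply, LinearMap.smul_apply, smul_eq_mul]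
        rw [hgξξ, hgξy y₀ hy₀, hgyξ x₀ hx₀]
        have : g x₀ (η y • ξ + y₀) = η y * g x₀ ξ + g x₀ y₀ := by
          simp only [map_add, map_smul, smul_eq_mul]
        ring
      have R2 : g y y = -(η y)^2 + g y₀ y₀ := by
        conv_lhs => rw [hydec]
        simp only [map_add, map_smul, LinearMap.add_apply, LinearMap.smul_apply, smul_eq_mul]
        rw [hgξξ, hgξy y₀ hy₀, hgyξ y₀ hy₀]; ring
      have R3 : g x x = -(η x)^2 + g x₀ x₀ := by
        conv_lhs => rw [hxdec]
        simp only [map_add, map_smul, LinearMap.add_apply, LinearMap.smul_apply, smul_eq_mul]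
        rw [hgξξ, hgξy x₀ hx₀, hgyξ x₀ hx₀]; ring
      have R4 : g x y₀ = g x₀ y₀ := by
        conv_lhs => rw [hxdec]
        simp only [map_add, map_smul, LinearMap.add_apply, LinearMap.smul_apply, smul_eq_mul]
        rw [hgξy y₀ hy₀]; ring
      have R5 : g y₀ x₀ = g x₀ y₀ := hgsymm y₀ x₀
      rw [E, p1, p3, p2, p4, R1, R2, R3, R4, R5]; ring
    -- polarization step 1
    have hP1 : ∀ x y z : V, F x y z y = g x y * g y z - g y y * g x z := by
      intro x y z
      have h1 := hQ (x + z) y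
      simp only [map_add, LinearMap.add_apply] at h1
      have hp := hpair z y x y
      have h2 := hQ x y
      have h3 := hQ z y
      linear_combination (h1 - h2 - h3 - hp) / 2 - g x y * hgsymm y z + g y y / 2 * hgsymm x z
    -- polarization step 2
    have hP2 : ∀ x y z w : V, F x y z w + F x w z y
        = (g x w * g y z - g y w * g x z) + (g x y * g w z - g w y * g x z) := by
      intro x y z w
      have h1 := hP1 x (y + w) z
      simp only [map_add, LinearMap.add_apply] at h1
      have h2 := hP1 x y z
      have h3 := hP1 x w z
      linear_combination h1 - h2 - h3
    -- symmetries of the difference tensor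
    have hGP2 : ∀ a b c d : V, F a b c d - (g a d * g b c - g b d * g a c)
        = -(F a d c b - (g a b * g d c - g d b * g a c)) := by
      intro a b c d; linear_combination hP2 a b c d
    have hGa1 : ∀ a b c d : V, F a b c d - (g a d * g b c - g b d * g a c)
        = -(F b a c d - (g b d * g a c - g a d * g b c)) := by
      intro a b c d; linear_combination hanti1 a b c d
    have hGa2 : ∀ a b c d : V, F a b c d - (g a d * g b c - g b d * g a c)
        = -(F a b d c - (g a c * g b d - g b c * g a d)) := by
      intro a b c d; linear_combination hanti2 a b c d
    have hGpair : ∀ a b c d : V, F a b c d - (g a d * g b c - g b d * g a c)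
        = F c d a b - (g c b * g d a - g d b * g c a) := by
      intro a b c d
      linear_combination hpair a b c d + g c b * hgsymm d a + g a d * hgsymm c b
        + g a c * hgsymm b d + g d b * hgsymm a c
    have hGbianchi : ∀ a b c d : V,
        (F a b c d - (g a d * g b c - g b d * g a c))
        + (F b c a d - (g b d * g c a - g c d * g b a))
        + (F c a b d - (g c d * g a b - g a d * g c b)) = 0 := by
      intro a b c d
      linear_combination hbianchi a b c d - g a d * hgsymm b c - g b d * hgsymm c a
        - g c d * hgsymm a b
    have cyc : ∀ a b c d : V, F a b c d - (g a d * g b c - g b d * g a c)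
        = F b c a d - (g b d * g c a - g c d * g b a) := by
      intro a b c d
      have t1 := hGP2 a b c d
      have t2 := hGa1 d a c b
      have t3 := hGpair d a c b
      have t4 := hGa1 b c d a
      have t5 := hGa2 b c d a
      linarith
    intro x y z w
    have hb := hGbianchi x y z w
    have c1 := cyc x y z w
    have c2 := cyc y z x w
    linarith
  · intro h u y h1 h2 h3 h4
    rw [h u y u y, hgsymm y u, h3, h1]
    ring
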